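/- Two p-strings x and y parameterized-match (there is a bijection π on Σp such that applying π to each p-symbol occurrence of x yields y, with static symbols fixed) if and only if their p-encodings are equal. -/

import Mathlib

/-- Symbols of a parameterized string: static symbols `s a` (from Σs) and
parameter symbols `p a` (from Σp). -/
inductive PSym where
  | s : ℕ → PSym
  | p : ℕ → PSym
deriving DecidableEq

/-- Symbols of a p-encoded string: static symbols, finite distances, and ∞. -/
inductive Enc where
  | s : ℕ → Enc
  | fin : ℕ → Enc
  | inf : Enc
deriving DecidableEq

/-- Order embedding: static symbols < natural numbers < ∞. -/
def Enc.toPair : Enc → ℕ ×ₗ ℕ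
  | .s a => toLex (0, a)
  | .fin d => toLex (1, d)
  | .inf => toLex (2, 0)

instance : LinearOrder Enc :=
  LinearOrder.lift' Enc.toPair (by
    rintro (a | a | _) (b | b | _) h <;>
      simp_all [Enc.toPair, toLex_inj, Prod.ext_iff])

/-- Largest position `j < i` (0-based) carrying the same symbol as position `i`. -/
def prevOcc (w : List PSym) (i : ℕ) : Option ℕ :=
  ((List.range i).filter (fun j => w[j]? = w[i]?)).max?

/-- The p-encoding of position `i` (0-based) of `w`. -/
def pencSym (w : List PSym) (i : ℕ) : Enc :=
  match w[i]? with
  | some (PSym.s a) => Enc.s a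
  | some (PSym.p _) =>
    match prevOcc w i with
    | some j => Enc.fin (i - j)
    | none => Enc.inf
  | none => Enc.inf

/-- The p-encoding ⟨w⟩ of a p-string `w`. -/
def penc (w : List PSym) : List Enc :=
  (List.range w.length).map (pencSym w)

/-- Lexicographic (strict) order on p-encoded strings. -/
def lexLt (x y : List Enc) : Prop := List.Lex (· < ·) x y

def lexLe (x y : List Enc) : Prop := lexLt x y ∨ x = y

/-- Length of the longest common prefix. -/
def lcp {α : Type*} [DecidableEq α] : List α → List α → ℕ
  | a :: x, b :: y => if a = b then lcp x y + 1 else 0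
  | _, _ => 0

/-- Number of ∞'s in the longest common prefix of two p-encoded strings. -/
def lcpInf (x y : List Enc) : ℕ := (x.take (lcp x y)).count Enc.inf

/-- Number of distinct p-symbols occurring in `w` (denoted |w|_p). -/
def distinctP (w : List PSym) : ℕ :=
  (w.filterMap (fun s => match s with | PSym.p a => some a | PSym.s _ => none)).dedup.length

/-- For `w` starting with a p-symbol: the rank of `w[1]` among the distinct
p-symbols of `w[1..h+1]`, where `h+1 = min{|w|, second occurrence of w[1] in w}`. -/
def fceRank (w : List PSym) : ℕ :=
  match w with
  | [] => 0
  | c :: rest => distinctP ((c :: rest).take (min (c :: rest).length (2 + rest.idxOf c)))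

/-- The function fce from the paper; `fce ε = $` is modelled as `Enc.s 0`. -/
def fce (w : List PSym) : Enc :=
  match w with
  | [] => Enc.s 0
  | PSym.s a :: _ => Enc.s a
  | w => Enc.fin (fceRank w)


/-- Renaming of p-symbols by a bijection `π` on Σp, fixing static symbols. -/
def applyPerm (π : Equiv.Perm ℕ) : PSym → PSym
  | PSym.s a => PSym.s a
  | PSym.p a => PSym.p (π a)


section Aux

open Classical in
/-- Extend a bijection between two finite subsets of ℕ to a permutation of ℕ. -/
noncomputable def extPerm (s t : Set ℕ) (hs : s.Finite) (ht : t.Finite) (e : s ≃ t) :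
    Equiv.Perm ℕ :=
  letI : DecidablePred (· ∈ s) := Classical.decPred _
  letI : DecidablePred (· ∈ t) := Classical.decPred _
  letI : DecidablePred (· ∈ sᶜ) := Classical.decPred _
  letI : DecidablePred (· ∈ tᶜ) := Classical.decPred _
  haveI : Infinite ↥sᶜ := hs.infinite_compl.to_subtype
  haveI : Infinite ↥tᶜ := ht.infinite_compl.to_subtype
  letI : Denumerable ↥sᶜ := Nat.Subtype.denumerable _
  letI : Denumerable ↥tᶜ := Nat.Subtype.denumerable _
  (Equiv.Set.sumCompl s).symm.trans
    ((e.sumCongr ((Denumerable.eqv _).trans (Denumerable.eqv _).symm)).trans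
      (Equiv.Set.sumCompl t))

lemma extPerm_apply (s t : Set ℕ) (hs : s.Finite) (ht : t.Finite) (e : s ≃ t)
    {a : ℕ} (ha : a ∈ s) : extPerm s t hs ht e a = (e ⟨a, ha⟩ : ℕ) := by
  letI : DecidablePred (· ∈ s) := Classical.decPred _
  letI : DecidablePred (· ∈ t) := Classical.decPred _
  simp only [extPerm, Equiv.trans_apply]
  rw [Equiv.Set.sumCompl_symm_apply (s := s) (x := ⟨a, ha⟩)]
  simp

lemma applyPerm_inj (π : Equiv.Perm ℕ) : Function.Injective (applyPerm π) := by
  intro a b h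
  cases a <;> cases b <;> simp_all [applyPerm]

lemma prevOcc_map (π : Equiv.Perm ℕ) (w : List PSym) (i : ℕ) :
    prevOcc (w.map (applyPerm π)) i = prevOcc w i := by
  unfold prevOcc
  congr 1
  apply List.filter_congr
  intro j _
  simp only [List.getElem?_map]
  rw [decide_eq_decide]
  exact (Option.map_injective (applyPerm_inj π)).eq_iff

lemma pencSym_map (π : Equiv.Perm ℕ) (w : List PSym) (i : ℕ) :
    pencSym (w.map (applyPerm π)) i = pencSym w i := by
  unfold pencSym
  rw [List.getElem?_map, prevOcc_map]
  cases h : w[i]? with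
  | none => rfl
  | some c => cases c <;> rfl

lemma penc_map (π : Equiv.Perm ℕ) (w : List PSym) :
    penc (w.map (applyPerm π)) = penc w := by
  unfold penc
  rw [List.length_map]
  exact List.map_congr_left fun i _ => pencSym_map π w i

lemma pencSym_eq_s_iff {w : List PSym} {i a : ℕ} :
    pencSym w i = Enc.s a ↔ w[i]? = some (PSym.s a) := by
  unfold pencSym
  cases h : w[i]? with
  | none => simp
  | some c =>
    cases c with
    | s b => simp
    | p b => cases prevOcc w i <;> simp

lemma pencSym_eq_fin {w : List PSym} {i d : ℕ} (h : pencSym w i = Enc.fin d) :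
    ∃ c m, w[i]? = some (PSym.p c) ∧ prevOcc w i = some m ∧ d = i - m := by
  unfold pencSym at h
  cases hw : w[i]? with
  | none => rw [hw] at h; exact absurd h (by simp)
  | some c =>
    rw [hw] at h
    cases c with
    | s b => exact absurd h (by simp)
    | p b =>
      cases hm : prevOcc w i with
      | none => rw [hm] at h; exact absurd h (by simp)
      | some m =>
        rw [hm] at h
        exact ⟨b, m, rfl, rfl, by injection h with h'; omega⟩

lemma pencSym_eq_inf {w : List PSym} {i : ℕ} (h : pencSym w i = Enc.inf) :
    w[i]? = none ∨ (∃ c, w[i]? = some (PSym.p c) ∧ prevOcc w i = none) := by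
  unfold pencSym at h
  cases hw : w[i]? with
  | none => exact Or.inl rfl
  | some c =>
    rw [hw] at h
    cases c with
    | s b => exact absurd h (by simp)
    | p b =>
      cases hm : prevOcc w i with
      | none => exact Or.inr ⟨b, rfl, rfl⟩
      | some m => rw [hm] at h; exact absurd h (by simp)

lemma prevOcc_spec {w : List PSym} {i j : ℕ} (h : prevOcc w i = some j) :
    j < i ∧ w[j]? = w[i]? := by
  unfold prevOcc at h
  obtain ⟨hm, -⟩ := List.max?_eq_some_iff'.mp h
  rw [List.mem_filter, List.mem_range] at hm
  exact ⟨hm.1, of_decide_eq_true hm.2⟩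

lemma prevOcc_le {w : List PSym} {i j : ℕ} (hj : j < i) (he : w[j]? = w[i]?) :
    ∃ m, prevOcc w i = some m ∧ j ≤ m := by
  have hmem : j ∈ (List.range i).filter (fun j => w[j]? = w[i]?) := by
    rw [List.mem_filter, List.mem_range]
    exact ⟨hj, decide_eq_true he⟩
  cases hm : prevOcc w i with
  | none =>
    unfold prevOcc at hm
    rw [List.max?_eq_none_iff] at hm
    rw [hm] at hmem
    exact absurd hmem List.not_mem_nil
  | some m =>
    refine ⟨m, rfl, ?_⟩
    have := (List.max?_eq_some_iff'.mp hm).2 j hmem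
    exact this

lemma key_dir (x y : List PSym) (hp : ∀ i, pencSym x i = pencSym y i)
    (hlen : x.length = y.length) :
    ∀ i j : ℕ, j ≤ i → x[j]? = x[i]? → y[j]? = y[i]? := by
  intro i
  induction i using Nat.strong_induction_on with
  | _ i IH =>
    intro j hji hx
    rcases eq_or_lt_of_le hji with rfl | hji
    · rfl
    cases hxi : x[i]? with
    | none =>
      have hin : x.length ≤ i := List.getElem?_eq_none_iff.mp hxi
      have hjn : x.length ≤ j := List.getElem?_eq_none_iff.mp (hx.trans hxi)
      rw [List.getElem?_eq_none (hlen ▸ hjn), List.getElem?_eq_none (hlen ▸ hin)]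
    | some c =>
      cases c with
      | s a =>
        have h2 : pencSym x j = Enc.s a := pencSym_eq_s_iff.mpr (hx.trans hxi)
        have h1 : pencSym x i = Enc.s a := pencSym_eq_s_iff.mpr hxi
        rw [pencSym_eq_s_iff.mp ((hp j).symm.trans h2),
          pencSym_eq_s_iff.mp ((hp i).symm.trans h1)]
      | p c =>
        obtain ⟨m, hm, hjm⟩ := prevOcc_le hji hx
        obtain ⟨hmi, hxm⟩ := prevOcc_spec hm
        have hpxi : pencSym x i = Enc.fin (i - m) := by
          unfold pencSym; rw [hxi, hm]
        have hpyi : pencSym y i = Enc.fin (i - m) := (hp i).symm.trans hpxi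
        obtain ⟨c', m', hyi, hm', hd⟩ := pencSym_eq_fin hpyi
        obtain ⟨hmi', hym⟩ := prevOcc_spec hm'
        have hmm : m' = m := by omega
        subst hmm
        have hxjm : x[j]? = x[m']? := hx.trans hxm.symm
        exact (IH m' hmi' j hjm hxjm).trans hym

end Aux

/-- Two p-strings parameterized-match iff their p-encodings are equal. -/
theorem stmt2 (x y : List PSym) :
    (∃ π : Equiv.Perm ℕ, x.map (applyPerm π) = y) ↔ penc x = penc y := by
  constructor
  · rintro ⟨π, rfl⟩
    exact (penc_map π x).symm
  · intro h
    classical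
    have hlen : x.length = y.length := by simpa [penc] using congrArg List.length h
    have hp : ∀ i, pencSym x i = pencSym y i := by
      intro i
      by_cases hi : i < x.length
      · have h2 := congrArg (fun l => l[i]?) h
        simpa [penc, List.getElem?_range, hi, hlen ▸ hi] using h2
      · unfold pencSym
        rw [List.getElem?_eq_none (by omega), List.getElem?_eq_none (by omega)]
    have hkey : ∀ i j : ℕ, x[j]? = x[i]? ↔ y[j]? = y[i]? := by
      have hkd := key_dir x y hp hlen
      have hkd' := key_dir y x (fun i => (hp i).symm) hlen.symm
      intro i j
      rcases le_total j i with hji | hij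
      · exact ⟨hkd i j hji, hkd' i j hji⟩
      · exact ⟨fun hh => (hkd j i hij hh.symm).symm, fun hh => (hkd' j i hij hh.symm).symm⟩
    -- x[i] is a p-symbol iff y[i] is
    have hpp : ∀ (i a : ℕ), x[i]? = some (PSym.p a) → ∃ b, y[i]? = some (PSym.p b) := by
      intro i a hxi
      cases he : pencSym x i with
      | s b =>
        rw [pencSym_eq_s_iff.mp he] at hxi
        exact absurd hxi (by simp)
      | fin d =>
        obtain ⟨c, m, hyi, -, -⟩ := pencSym_eq_fin ((hp i).symm.trans he)
        exact ⟨c, hyi⟩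
      | inf =>
        rcases pencSym_eq_inf ((hp i).symm.trans he) with hn | ⟨c, hyi, -⟩
        · have : x.length ≤ i := hlen ▸ List.getElem?_eq_none_iff.mp hn
          rw [List.getElem?_eq_none this] at hxi
          exact absurd hxi (by simp)
        · exact ⟨c, hyi⟩
    have hpp' : ∀ (i b : ℕ), y[i]? = some (PSym.p b) → ∃ a, x[i]? = some (PSym.p a) := by
      intro i b hyi
      cases he : pencSym y i with
      | s c =>
        rw [pencSym_eq_s_iff.mp he] at hyi
        exact absurd hyi (by simp)
      | fin d =>
        obtain ⟨c, m, hxi, -, -⟩ := pencSym_eq_fin ((hp i).trans he)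
        exact ⟨c, hxi⟩
      | inf =>
        rcases pencSym_eq_inf ((hp i).trans he) with hn | ⟨c, hxi, -⟩
        · have : y.length ≤ i := hlen ▸ List.getElem?_eq_none_iff.mp hn
          rw [List.getElem?_eq_none (hlen ▸ this)] at hyi
          exact absurd hyi (by simp)
        · exact ⟨c, hxi⟩
    -- the sets of parameter symbols
    set Px : Set ℕ := {a | PSym.p a ∈ x} with hPx
    set Py : Set ℕ := {b | PSym.p b ∈ y} with hPy
    have hfinx : Px.Finite := by
      apply Set.Finite.ofFinset
        (x.filterMap (fun s => match s with | PSym.p a => some a | PSym.s _ => none)).toFinset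
      intro a
      simp only [List.mem_toFinset, List.mem_filterMap, hPx, Set.mem_setOf_eq]
      constructor
      · rintro ⟨c, hc, hm⟩
        cases c with
        | s b => simp at hm
        | p b => simp at hm; subst hm; exact hc
      · intro ha; exact ⟨PSym.p a, ha, rfl⟩
    have hfiny : Py.Finite := by
      apply Set.Finite.ofFinset
        (y.filterMap (fun s => match s with | PSym.p a => some a | PSym.s _ => none)).toFinset
      intro b
      simp only [List.mem_toFinset, List.mem_filterMap, hPy, Set.mem_setOf_eq]
      constructor
      · rintro ⟨c, hc, hm⟩
        cases c with
        | s a => simp at hm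
        | p a => simp at hm; subst hm; exact hc
      · intro hb; exact ⟨PSym.p b, hb, rfl⟩
    -- coherence
    have hcoh : ∀ a b b' : ℕ, (∃ i : ℕ, x[i]? = some (PSym.p a) ∧ y[i]? = some (PSym.p b)) →
        (∃ j : ℕ, x[j]? = some (PSym.p a) ∧ y[j]? = some (PSym.p b')) → b = b' := by
      rintro a b b' ⟨i, hxi, hyi⟩ ⟨j, hxj, hyj⟩
      have hxe : x[j]? = x[i]? := hxj.trans hxi.symm
      have hye : y[j]? = y[i]? := (hkey i j).mp hxe
      rw [hyj, hyi] at hye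
      injection hye with hye'
      injection hye' with hye''
      exact hye''.symm
    -- the bijection between Px and Py
    have hf : ∀ a : Px, ∃ b : Py, ∃ i : ℕ, x[i]? = some (PSym.p a.1) ∧ y[i]? = some (PSym.p b.1) := by
      rintro ⟨a, ha⟩
      obtain ⟨i, hi⟩ := List.mem_iff_getElem?.mp ha
      obtain ⟨b, hb⟩ := hpp i a hi
      exact ⟨⟨b, List.mem_iff_getElem?.mpr ⟨i, hb⟩⟩, i, hi, hb⟩
    choose f hfspec using hf
    have hinj : Function.Injective f := by
      rintro a a' hfe
      obtain ⟨i, hxi, hyi⟩ := hfspec a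
      obtain ⟨j, hxj, hyj⟩ := hfspec a'
      have hye : y[j]? = y[i]? := by rw [hyi, hyj, hfe]
      have hxe : x[j]? = x[i]? := (hkey i j).mpr hye
      rw [hxi, hxj] at hxe
      injection hxe with hxe'
      injection hxe' with hxe''
      exact Subtype.ext hxe''.symm
    have hsurj : Function.Surjective f := by
      rintro ⟨b, hb⟩
      obtain ⟨i, hi⟩ := List.mem_iff_getElem?.mp hb
      obtain ⟨a, ha⟩ := hpp' i b hi
      refine ⟨⟨a, List.mem_iff_getElem?.mpr ⟨i, ha⟩⟩, ?_⟩
      apply Subtype.ext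
      exact hcoh a _ b (hfspec ⟨a, List.mem_iff_getElem?.mpr ⟨i, ha⟩⟩) ⟨i, ha, hi⟩
    let e : Px ≃ Py := Equiv.ofBijective f ⟨hinj, hsurj⟩
    refine ⟨extPerm Px Py hfinx hfiny e, ?_⟩
    apply List.ext_getElem?
    intro i
    rw [List.getElem?_map]
    cases hxi : x[i]? with
    | none =>
      have : y.length ≤ i := hlen ▸ List.getElem?_eq_none_iff.mp hxi
      rw [List.getElem?_eq_none this]
      rfl
    | some c =>
      cases c with
      | s a =>
        have h1 : pencSym x i = Enc.s a := pencSym_eq_s_iff.mpr hxi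
        rw [pencSym_eq_s_iff.mp ((hp i).symm.trans h1)]
        rfl
      | p a =>
        have ha : a ∈ Px := List.mem_iff_getElem?.mpr ⟨i, hxi⟩
        have hπ : extPerm Px Py hfinx hfiny e a = (f ⟨a, ha⟩ : ℕ) :=
          extPerm_apply Px Py hfinx hfiny e ha
        have hyi : y[i]? = some (PSym.p (f ⟨a, ha⟩ : ℕ)) := by
          obtain ⟨b, hb⟩ := hpp i a hxi
          have : b = (f ⟨a, ha⟩ : ℕ) := hcoh a b _ ⟨i, hxi, hb⟩ (hfspec ⟨a, ha⟩)
          rw [← this]; exact hb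
        rw [hyi]
        simp only [Option.map_some]
        congr 1
        show applyPerm _ (PSym.p a) = _
        simp only [applyPerm, hπ]
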